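/- Let p be a prime, q = p^e a power of p, ℓ an odd prime different from p, and m a positive integer coprime to q. Let γ be an integer and let τ be the least positive integer with γ·q^τ ≡ γ (mod m). If ℓ does not divide q^τ − 1, then v_ℓ(γ) ≥ v_ℓ(m), and there exists an integer γ₀ with γ₀ ≡ γ (mod m) and v_ℓ(γ₀) ≥ v_ℓ(m) + 1. -/

import Mathlib

theorem stmt_0 (p e q ℓ m : ℕ) (hp : p.Prime) (he : 0 < e) (hq : q = p ^ e)
    (hℓ : ℓ.Prime) (hℓ2 : ℓ ≠ 2) (hℓp : ℓ ≠ p)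
    (hm : 0 < m) (hmq : Nat.Coprime m q)
    (γ : ℤ) (τ : ℕ)
    (hτ : IsLeast {t : ℕ | 0 < t ∧ γ * (q : ℤ) ^ t ≡ γ [ZMOD (m : ℤ)]} τ)
    (hnd : ¬ (ℓ : ℤ) ∣ (q : ℤ) ^ τ - 1) :
    (ℓ : ℤ) ^ padicValNat ℓ m ∣ γ ∧
      ∃ γ₀ : ℤ, γ₀ ≡ γ [ZMOD (m : ℤ)] ∧ (ℓ : ℤ) ^ (padicValNat ℓ m + 1) ∣ γ₀ := by
  haveI : Fact ℓ.Prime := ⟨hℓ⟩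
  set k := padicValNat ℓ m with hkdef
  have hℓZ : Prime (ℓ : ℤ) := Int.prime_iff_natAbs_prime.mpr (by simpa using hℓ)
  -- m ∣ γ * (q^τ - 1)
  have hmem := hτ.1.2
  have hdvd1 : (m : ℤ) ∣ γ * ((q : ℤ) ^ τ - 1) := by
    have := hmem.dvd
    have h : γ - γ * (q : ℤ) ^ τ = -(γ * ((q : ℤ) ^ τ - 1)) := by ring
    rw [h] at this
    exact (dvd_neg).mp this
  -- ℓ^k ∣ m
  have hkm : (ℓ : ℤ) ^ k ∣ (m : ℤ) := by
    exact_mod_cast Int.natCast_dvd_natCast.mpr (pow_padicValNat_dvd)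
  have hcop : IsCoprime ((ℓ : ℤ) ^ k) ((q : ℤ) ^ τ - 1) :=
    IsCoprime.pow_left ((hℓZ.coprime_iff_not_dvd).mpr hnd)
  have hγ : (ℓ : ℤ) ^ k ∣ γ :=
    hcop.dvd_of_dvd_mul_right (dvd_trans hkm hdvd1)
  refine ⟨hγ, ?_⟩
  -- m' := m / ℓ^k, not divisible by ℓ
  obtain ⟨m', hm'⟩ : ℓ ^ k ∣ m := pow_padicValNat_dvd
  have hℓm' : ¬ ℓ ∣ m' := by
    intro hd
    obtain ⟨c, hc⟩ := hd
    have : ℓ ^ (k + 1) ∣ m := ⟨c, by rw [hm', hc]; ring⟩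
    exact pow_succ_padicValNat_not_dvd hm.ne' this
  obtain ⟨γ', hγ'⟩ := hγ
  haveI : NeZero ℓ := ⟨hℓ.ne_zero⟩
  have hm'ne : (m' : ZMod ℓ) ≠ 0 := by
    rw [Ne, ZMod.natCast_eq_zero_iff]
    exact hℓm'
  set u : ZMod ℓ := (-(γ' : ZMod ℓ)) * (m' : ZMod ℓ)⁻¹ with hu
  set t : ℕ := u.val with ht
  refine ⟨γ + (m : ℤ) * t, ?_, ?_⟩
  · exact Int.modEq_iff_dvd.mpr ⟨-t, by ring⟩
  · have hsum : (ℓ : ℤ) ∣ γ' + (m' : ℤ) * t := by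
      rw [← ZMod.intCast_zmod_eq_zero_iff_dvd]
      push_cast
      rw [ht, hu, ZMod.natCast_val, ZMod.cast_id]
      rw [mul_comm ((m' : ZMod ℓ)) _, mul_assoc, inv_mul_cancel₀ hm'ne]
      ring
    obtain ⟨c, hc⟩ := hsum
    refine ⟨c, ?_⟩
    have hmz : (m : ℤ) = (ℓ : ℤ) ^ k * m' := by exact_mod_cast congrArg (Nat.cast : ℕ → ℤ) hm'
    rw [hγ', hmz, pow_succ]
    rw [mul_comm ((ℓ:ℤ)^k) ((ℓ:ℤ))]  -- adjust
    calc (ℓ:ℤ)^k * γ' + (ℓ:ℤ)^k * m' * t = (ℓ:ℤ)^k * (γ' + m' * t) := by ring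
    _ = (ℓ:ℤ)^k * ((ℓ:ℤ) * c) := by rw [hc]
    _ = (ℓ:ℤ) * (ℓ:ℤ)^k * c := by ring
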